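/- For all natural numbers k, ℓ, m, n with k ≤ n, ℓ ≤ m and k * m = ℓ * n, there exists a (k, ℓ)-biregular bipartite graph on bipartition (P, Q) with |P| = m, |Q| = n which admits an automorphism whose orbits are exactly P and Q (a doubly-circulant graph). -/

import Mathlib

namespace Stmt5Aux

/-- adjacency condition -/
def C (g c x y : ℕ) : Prop := ((y : ZMod g) - (x : ZMod g)).val < c

instance (g c x y : ℕ) : Decidable (C g c x y) := by unfold C; infer_instance

def graph (m n g c : ℕ) : SimpleGraph (Fin m ⊕ Fin n) where
  Adj s t := match s, t with
    | .inl a, .inr b => C g c a.val b.val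
    | .inr b, .inl a => C g c a.val b.val
    | _, _ => False
  symm := ⟨by rintro (a|b) (a'|b') h <;> simp_all⟩
  loopless := ⟨by rintro (a|b) h <;> exact h⟩

@[simp] lemma graph_adj_lr (m n g c : ℕ) (a : Fin m) (b : Fin n) :
    (graph m n g c).Adj (Sum.inl a) (Sum.inr b) ↔ C g c a.val b.val := Iff.rfl

@[simp] lemma graph_adj_ll (m n g c : ℕ) (a b : Fin m) :
    ¬ (graph m n g c).Adj (Sum.inl a) (Sum.inl b) := fun h => h

@[simp] lemma graph_adj_rr (m n g c : ℕ) (a b : Fin n) :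
    ¬ (graph m n g c).Adj (Sum.inr a) (Sum.inr b) := fun h => h

lemma cast_mod_eq {g n x : ℕ} (hg : g ∣ n) : ((x % n : ℕ) : ZMod g) = (x : ZMod g) := by
  obtain ⟨t, rfl⟩ := hg
  conv_rhs => rw [← Nat.mod_add_div x (g * t)]
  push_cast
  simp [ZMod.natCast_self]

lemma rot_cast {g n : ℕ} (hg : g ∣ n) (b : Fin n) :
    (((finRotate n b : Fin n) : ℕ) : ZMod g) = ((b : ℕ) : ZMod g) + 1 := by
  match n, b with
  | n + 1, b =>
    rw [finRotate_succ_apply]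
    rcases eq_or_ne b (Fin.last n) with hb | hb
    · have h0 : ((n + 1 : ℕ) : ZMod g) = 0 := by
        have := cast_mod_eq (g := g) (x := n + 1) hg
        rw [Nat.mod_self] at this
        simpa using this.symm
      rw [Fin.val_add_one, if_pos hb, hb]
      simp only [Fin.val_last, Nat.cast_zero]
      rw [show ((n : ℕ) : ZMod g) + 1 = ((n + 1 : ℕ) : ZMod g) by push_cast; ring, h0]
    · rw [Fin.val_add_one, if_neg hb]
      push_cast
      ring

open Fin.NatCast in
lemma rot_iterate {n : ℕ} (j : ℕ) (b : Fin (n+1)) :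
    (⇑(finRotate (n+1)))^[j] b = b + (j : Fin (n+1)) := by
  induction j with
  | zero => simp
  | succ j ih =>
    rw [Function.iterate_succ_apply', ih, finRotate_succ_apply]
    rw [show ((j + 1 : ℕ) : Fin (n+1)) = (j : Fin (n+1)) + 1 by push_cast; rfl]
    exact add_assoc _ _ _

open Fin.NatCast in
lemma rot_orbit {n : ℕ} (b b' : Fin n) : ∃ j : ℕ, (⇑(finRotate n))^[j] b = b' := by
  match n, b, b' with
  | n + 1, b, b' =>
    refine ⟨b'.val + (n+1) - b.val, ?_⟩
    rw [rot_iterate]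
    apply Fin.ext
    rw [Fin.val_add, Fin.val_natCast, Nat.add_mod_mod]
    have hb := b.isLt
    have hb' := b'.isLt
    rw [show b.val + (b'.val + (n+1) - b.val) = b'.val + (n+1) by omega]
    simp [Nat.mod_eq_of_lt hb']

/-- Key counting lemma: fibers of `Fin n → ZMod g`. -/
lemma countA (g n c : ℕ) (hg : g ∣ n) (hgpos : 0 < g) (Q : ZMod g → Prop) :
    Nat.card {b : Fin n // Q ((b : ℕ) : ZMod g)} = (n / g) * Nat.card {y : ZMod g // Q y} := by
  haveI : NeZero g := ⟨hgpos.ne'⟩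
  have key : {b : Fin n // Q ((b : ℕ) : ZMod g)} ≃ Fin (n / g) × {y : ZMod g // Q y} := by
    refine ⟨fun b => (⟨b.1.val / g, ?_⟩, ⟨((b.1 : ℕ) : ZMod g), b.2⟩),
      fun p => ⟨⟨(p.2.1.val : ℕ) + p.1.val * g, ?_⟩, ?_⟩, ?_, ?_⟩
    · exact Nat.div_lt_div_of_lt_of_dvd hg b.1.isLt
    · have h1 : p.2.1.val < g := ZMod.val_lt _
      have h2 : (p.1.val + 1) * g ≤ (n / g) * g := Nat.mul_le_mul_right _ p.1.isLt
      rw [Nat.div_mul_cancel hg] at h2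
      have h3 : p.1.val * g + g = (p.1.val + 1) * g := by ring
      omega
    · have hyv : ((p.2.1.val : ℕ) : ZMod g) = p.2.1 := ZMod.natCast_rightInverse p.2.1
      have : (((p.2.1.val : ℕ) + p.1.val * g : ℕ) : ZMod g) = p.2.1 := by
        push_cast
        rw [hyv, ZMod.natCast_self]
        ring
      simpa [this] using p.2.2
    · rintro ⟨b, hb⟩
      apply Subtype.ext
      apply Fin.ext
      show ((b : ℕ) : ZMod g).val + (b : ℕ) / g * g = (b : ℕ)
      rw [ZMod.val_natCast]
      exact Nat.mod_add_div' _ _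
    · rintro ⟨q, y, hy⟩
      have h1 : y.val < g := ZMod.val_lt _
      refine Prod.ext (Fin.ext ?_) (Subtype.ext ?_)
      · show ((y.val : ℕ) + q.val * g) / g = q.val
        rw [Nat.add_mul_div_right _ _ hgpos, Nat.div_eq_of_lt h1]
        omega
      · have hyv : ((y.val : ℕ) : ZMod g) = y := ZMod.natCast_rightInverse y
        show (((y.val : ℕ) + q.val * g : ℕ) : ZMod g) = y
        push_cast
        rw [hyv, ZMod.natCast_self]
        ring
  rw [Nat.card_congr key, Nat.card_prod, Nat.card_eq_fintype_card, Fintype.card_fin]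

lemma countC (g c : ℕ) (hgpos : 0 < g) (hc : c ≤ g) :
    Nat.card {y : ZMod g // y.val < c} = c := by
  haveI : NeZero g := ⟨hgpos.ne'⟩
  have key : {y : ZMod g // y.val < c} ≃ Fin c := by
    refine ⟨fun y => ⟨y.1.val, y.2⟩, fun j => ⟨((j : ℕ) : ZMod g), ?_⟩, ?_, ?_⟩
    · rw [ZMod.val_cast_of_lt (lt_of_lt_of_le j.isLt hc)]; exact j.isLt
    · rintro ⟨y, hy⟩
      apply Subtype.ext
      exact ZMod.natCast_rightInverse y
    · rintro ⟨j, hj⟩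
      apply Fin.ext
      exact ZMod.val_cast_of_lt (lt_of_lt_of_le hj hc)
  rw [Nat.card_congr key, Nat.card_eq_fintype_card, Fintype.card_fin]

end Stmt5Aux

open Stmt5Aux in
theorem stmt_5 (k ℓ m n : ℕ) (hk : k ≤ n) (hl : ℓ ≤ m) (h : k * m = ℓ * n) :
    ∃ (G : SimpleGraph (Fin m ⊕ Fin n)) (φ : G ≃g G),
      (∀ a b : Fin m, ¬ G.Adj (Sum.inl a) (Sum.inl b)) ∧
      (∀ a b : Fin n, ¬ G.Adj (Sum.inr a) (Sum.inr b)) ∧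
      (∀ a : Fin m, Nat.card {b : Fin n | G.Adj (Sum.inl a) (Sum.inr b)} = k) ∧
      (∀ b : Fin n, Nat.card {a : Fin m | G.Adj (Sum.inl a) (Sum.inr b)} = ℓ) ∧
      (∀ a : Fin m, ∃ a' : Fin m, φ (Sum.inl a) = Sum.inl a') ∧
      (∀ b : Fin n, ∃ b' : Fin n, φ (Sum.inr b) = Sum.inr b') ∧
      (∀ a a' : Fin m, ∃ j : ℕ, (fun x => φ x)^[j] (Sum.inl a) = Sum.inl a') ∧
      (∀ b b' : Fin n, ∃ j : ℕ, (fun x => φ x)^[j] (Sum.inr b) = Sum.inr b') := by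
  set g := Nat.gcd m n with hg
  have hgm : g ∣ m := Nat.gcd_dvd_left m n
  have hgn : g ∣ n := Nat.gcd_dvd_right m n
  set c := k / (n / g) with hc
  -- key arithmetic facts, valid when both m, n > 0
  have arith : 0 < m → 0 < n → c * (n / g) = k ∧ c * (m / g) = ℓ ∧ c ≤ g := by
    intro hm hn
    have hgpos : 0 < g := Nat.gcd_pos_of_pos_left n hm
    have hng : 0 < n / g := Nat.div_pos (Nat.le_of_dvd hn hgn) hgpos
    have hmg : 0 < m / g := Nat.div_pos (Nat.le_of_dvd hm hgm) hgpos
    have hcop : Nat.Coprime (m / g) (n / g) := Nat.coprime_div_gcd_div_gcd hgpos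
    have heq : k * (m / g) = ℓ * (n / g) := by
      have := congrArg (· / g) h
      simpa [Nat.mul_div_assoc k hgm, Nat.mul_div_assoc ℓ hgn] using this
    have hdvd : (n / g) ∣ k := by
      have : (n / g) ∣ k * (m / g) := ⟨ℓ, by rw [heq]; ring⟩
      exact (Nat.Coprime.dvd_of_dvd_mul_right (Nat.Coprime.symm hcop) this)
    have h1 : c * (n / g) = k := Nat.div_mul_cancel hdvd
    have h2 : c * (m / g) = ℓ := by
      have : (c * (m / g)) * (n / g) = ℓ * (n / g) := by
        rw [mul_right_comm, h1]; exact heq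
      exact Nat.eq_of_mul_eq_mul_right hng this
    have h3 : c ≤ g := by
      have : c * (n / g) ≤ g * (n / g) := by rw [h1, Nat.mul_div_cancel' hgn]; exact hk
      exact Nat.le_of_mul_le_mul_right this hng
    exact ⟨h1, h2, h3⟩
  refine ⟨graph m n g c, ⟨Equiv.sumCongr (finRotate m) (finRotate n), ?_⟩, ?_, ?_, ?_, ?_, ?_, ?_, ?_, ?_⟩
  · -- map_rel_iff'
    rintro (a|b) (a'|b') <;>
      simp only [Equiv.sumCongr_apply, Sum.map_inl, Sum.map_inr, graph_adj_lr,
        graph_adj_ll, graph_adj_rr] <;>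
      try rfl
    · show C g c _ _ ↔ C g c _ _
      unfold C
      rw [rot_cast hgm a, rot_cast hgn b']
      ring_nf
    · show C g c _ _ ↔ C g c _ _
      unfold C
      rw [rot_cast hgm a', rot_cast hgn b]
      ring_nf
  · exact fun a b => graph_adj_ll m n g c a b
  · exact fun a b => graph_adj_rr m n g c a b
  · -- P-side degree
    intro a
    have hm : 0 < m := a.pos
    rcases Nat.eq_zero_or_pos n with hn | hn
    · subst hn
      have : k = 0 := Nat.le_zero.mp hk
      simp [this, Nat.card_eq_zero, Set.eq_empty_iff_forall_notMem]
    · obtain ⟨h1, h2, h3⟩ := arith hm hn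
      have hgpos : 0 < g := Nat.gcd_pos_of_pos_left n hm
      haveI : NeZero g := ⟨hgpos.ne'⟩
      have : Nat.card {b : Fin n | (graph m n g c).Adj (Sum.inl a) (Sum.inr b)}
          = Nat.card {b : Fin n // (fun y => (y - ((a : ℕ) : ZMod g)).val < c) ((b : ℕ) : ZMod g)} := rfl
      rw [this, countA g n c hgn hgpos (fun y => (y - ((a : ℕ) : ZMod g)).val < c)]
      have : Nat.card {y : ZMod g // (y - ((a : ℕ) : ZMod g)).val < c}
          = Nat.card {y : ZMod g // y.val < c} := by
        apply Nat.card_congr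
        exact (Equiv.subRight ((a : ℕ) : ZMod g)).subtypeEquiv (fun y => by simp)
      rw [this, countC g c hgpos h3]
      rw [mul_comm]; exact h1
  · -- Q-side degree
    intro b
    have hn : 0 < n := b.pos
    rcases Nat.eq_zero_or_pos m with hm | hm
    · subst hm
      have : ℓ = 0 := Nat.le_zero.mp hl
      simp [this, Nat.card_eq_zero, Set.eq_empty_iff_forall_notMem]
    · obtain ⟨h1, h2, h3⟩ := arith hm hn
      have hgpos : 0 < g := Nat.gcd_pos_of_pos_left n hm
      haveI : NeZero g := ⟨hgpos.ne'⟩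
      have : Nat.card {a : Fin m | (graph m n g c).Adj (Sum.inl a) (Sum.inr b)}
          = Nat.card {a : Fin m // (fun z => (((b : ℕ) : ZMod g) - z).val < c) ((a : ℕ) : ZMod g)} := rfl
      rw [this, countA g m c hgm hgpos (fun z => (((b : ℕ) : ZMod g) - z).val < c)]
      have : Nat.card {z : ZMod g // (((b : ℕ) : ZMod g) - z).val < c}
          = Nat.card {y : ZMod g // y.val < c} := by
        apply Nat.card_congr
        exact (Equiv.subLeft ((b : ℕ) : ZMod g)).subtypeEquiv (fun y => by simp)
      rw [this, countC g c hgpos h3]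
      rw [mul_comm]; exact h2
  · exact fun a => ⟨finRotate m a, rfl⟩
  · exact fun b => ⟨finRotate n b, rfl⟩
  · intro a a'
    obtain ⟨j, hj⟩ := rot_orbit a a'
    refine ⟨j, ?_⟩
    have key : ∀ (j : ℕ) (a : Fin m),
        (fun x => (Equiv.sumCongr (finRotate m) (finRotate n)) x)^[j] (Sum.inl a)
          = Sum.inl ((⇑(finRotate m))^[j] a) := by
      intro j
      induction j with
      | zero => intro a; rfl
      | succ j ih => intro a; rw [Function.iterate_succ_apply, Function.iterate_succ_apply]; exact ih _
    show (fun x => (Equiv.sumCongr (finRotate m) (finRotate n)) x)^[j] (Sum.inl a) = Sum.inl a'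
    rw [key j a, hj]
  · intro b b'
    obtain ⟨j, hj⟩ := rot_orbit b b'
    refine ⟨j, ?_⟩
    have key : ∀ (j : ℕ) (b : Fin n),
        (fun x => (Equiv.sumCongr (finRotate m) (finRotate n)) x)^[j] (Sum.inr b)
          = Sum.inr ((⇑(finRotate n))^[j] b) := by
      intro j
      induction j with
      | zero => intro b; rfl
      | succ j ih => intro b; rw [Function.iterate_succ_apply, Function.iterate_succ_apply]; exact ih _
    show (fun x => (Equiv.sumCongr (finRotate m) (finRotate n)) x)^[j] (Sum.inr b) = Sum.inr b'
    rw [key j b, hj]
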